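/- Let γ ∈ (0,1) and for each integer n ≥ 1 set q_n := 2 ∫₀^π cos(n x) · x^{−γ} dx. Then there exist constants 0 < c ≤ C < ∞ (depending only on γ) such that for all n ≥ 1: c · n^{γ−1} ≤ q_n ≤ C · n^{γ−1}; in particular q_n > 0 for every n ≥ 1. -/

import Mathlib

open Real intervalIntegral MeasureTheory Set

noncomputable def rieszA (γ : ℝ) (k : ℕ) : ℝ :=
  ∫ v in (0:ℝ)..π, Real.cos v * (v + k * π) ^ (-γ)

lemma rieszA_eq (γ : ℝ) (k : ℕ) :
    rieszA γ k = ∫ v in (0:ℝ)..π, Real.cos v * (v + k * π) ^ (-γ) := rfl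



lemma II_rpow {γ : ℝ} (hγ1 : γ < 1) (a b : ℝ) :
    IntervalIntegrable (fun x : ℝ => x ^ (-γ)) volume a b :=
  intervalIntegral.intervalIntegrable_rpow' (by linarith)

lemma II_shift {γ : ℝ} (hγ1 : γ < 1) (c a b : ℝ) :
    IntervalIntegrable (fun x : ℝ => (x + c) ^ (-γ)) volume a b := by
  simpa using (II_rpow hγ1 (a + c) (b + c)).comp_add_right c

lemma pos_sym {f : ℝ → ℝ} (hf : IntervalIntegrable f volume 0 π)
    (hlt : ∀ w ∈ Set.Ioo (0:ℝ) (π/2), f (π - w) < f w) :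
    0 < ∫ v in (0:ℝ)..π, Real.cos v * f v := by
  have hπ := Real.pi_pos
  have hsub1 : Set.uIcc (0:ℝ) (π/2) ⊆ Set.uIcc (0:ℝ) π := by
    rw [Set.uIcc_of_le (by linarith), Set.uIcc_of_le hπ.le]
    exact Set.Icc_subset_Icc le_rfl (by linarith)
  have hsub2 : Set.uIcc (π/2) π ⊆ Set.uIcc (0:ℝ) π := by
    rw [Set.uIcc_of_le (by linarith), Set.uIcc_of_le hπ.le]
    exact Set.Icc_subset_Icc (by linarith) le_rfl
  have hcf : IntervalIntegrable (fun v => Real.cos v * f v) volume 0 π :=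
    hf.continuousOn_mul Real.continuous_cos.continuousOn
  have hcf1 : IntervalIntegrable (fun v => Real.cos v * f v) volume 0 (π/2) :=
    hcf.mono_set hsub1
  have hcf2 : IntervalIntegrable (fun v => Real.cos v * f v) volume (π/2) π :=
    hcf.mono_set hsub2
  have hg : IntervalIntegrable (fun w => f (π - w)) volume 0 (π/2) := by
    have h0 : IntervalIntegrable (fun w => f (π - w)) volume (π - 0) (π - π) :=
      hf.comp_sub_left π
    apply h0.mono_set
    rw [sub_zero, sub_self, Set.uIcc_comm π 0, Set.uIcc_of_le hπ.le,
      Set.uIcc_of_le (by linarith : (0:ℝ) ≤ π/2)]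
    exact Set.Icc_subset_Icc le_rfl (by linarith)
  have hcg : IntervalIntegrable (fun w => Real.cos w * f (π - w)) volume 0 (π/2) :=
    hg.continuousOn_mul Real.continuous_cos.continuousOn
  have hswap : (∫ v in (π/2)..π, Real.cos v * f v)
      = - ∫ w in (0:ℝ)..(π/2), Real.cos w * f (π - w) := by
    have h := intervalIntegral.integral_comp_sub_left (a := 0) (b := π/2)
      (fun v => Real.cos v * f v) π
    rw [sub_zero, show π - π/2 = π/2 by ring] at h
    rw [← h, ← intervalIntegral.integral_neg]
    apply intervalIntegral.integral_congr
    intro x _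
    simp [Real.cos_pi_sub]
  have hsplit : (∫ v in (0:ℝ)..π, Real.cos v * f v)
      = ∫ w in (0:ℝ)..(π/2), (Real.cos w * f w - Real.cos w * f (π - w)) := by
    rw [intervalIntegral.integral_sub hcf1 hcg,
      ← intervalIntegral.integral_add_adjacent_intervals hcf1 hcf2, hswap]
    ring
  rw [hsplit]
  apply intervalIntegral_pos_of_pos_on (hcf1.sub hcg)
  · intro w hw
    have hcos : 0 < Real.cos w :=
      Real.cos_pos_of_mem_Ioo ⟨by linarith [hw.1], hw.2⟩
    have := hlt w hw
    nlinarith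
  · linarith


lemma A_pos {γ : ℝ} (hγ0 : 0 < γ) (hγ1 : γ < 1) (k : ℕ) : 0 < rieszA γ k := by
  rw [rieszA_eq]
  apply pos_sym (II_shift hγ1 _ _ _)
  intro w hw
  have h1 : 0 < w + k * π := by
    have : (0:ℝ) ≤ k * π := by positivity
    linarith [hw.1]
  exact Real.rpow_lt_rpow_of_neg h1 (by linarith [hw.1, hw.2]) (by linarith)

lemma phi_anti {γ : ℝ} (hγ0 : 0 < γ) (hγ1 : γ < 1) :
    StrictAntiOn (fun x : ℝ => x ^ (-γ) - (x + π) ^ (-γ)) (Set.Ioi 0) := by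
  have hπ := Real.pi_pos
  apply strictAntiOn_of_deriv_neg (convex_Ioi 0)
  · apply ContinuousOn.sub
    · exact continuousOn_id.rpow_const fun x hx => Or.inl (ne_of_gt hx)
    · exact (continuous_id.add continuous_const).continuousOn.rpow_const
        fun x hx => Or.inl (by have : (0:ℝ) < x := hx; show x + π ≠ 0; exact ne_of_gt (by linarith [Real.pi_pos]))
  · intro x hx
    rw [interior_Ioi] at hx
    have hx0 : (0:ℝ) < x := hx
    have h1 : HasDerivAt (fun x : ℝ => x ^ (-γ)) (-γ * x ^ (-γ - 1)) x :=
      Real.hasDerivAt_rpow_const (Or.inl hx0.ne')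
    have h2 : HasDerivAt (fun x : ℝ => (x + π) ^ (-γ))
        (1 * (-γ) * (x + π) ^ (-γ - 1)) x :=
      (hasDerivAt_id x |>.add_const π).rpow_const (Or.inl (by positivity))
    rw [(by have h12 : HasDerivAt (fun x : ℝ => x ^ (-γ) - (x + π) ^ (-γ)) (-γ * x ^ (-γ - 1) - 1 * (-γ) * (x + π) ^ (-γ - 1)) x := h1.sub h2; exact h12.deriv : deriv (fun x : ℝ => x ^ (-γ) - (x + π) ^ (-γ)) x = _)]
    have h3 : (x + π) ^ (-γ - 1) < x ^ (-γ - 1) :=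
      Real.rpow_lt_rpow_of_neg hx0 (by linarith) (by linarith)
    nlinarith

lemma A_strict_anti {γ : ℝ} (hγ0 : 0 < γ) (hγ1 : γ < 1) (k : ℕ) :
    rieszA γ (k + 1) < rieszA γ k := by
  have hπ := Real.pi_pos
  have key : (0:ℝ) < ∫ v in (0:ℝ)..π,
      Real.cos v * ((v + k * π) ^ (-γ) - (v + (k + 1 : ℕ) * π) ^ (-γ)) := by
    apply pos_sym ((II_shift hγ1 _ _ _).sub (II_shift hγ1 _ _ _))
    intro w hw
    have hmem1 : w + k * π ∈ Set.Ioi (0:ℝ) := by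
      have : (0:ℝ) ≤ k * π := by positivity
      simp only [Set.mem_Ioi]; linarith [hw.1]
    have hmem2 : (π - w) + k * π ∈ Set.Ioi (0:ℝ) := by
      have : (0:ℝ) ≤ k * π := by positivity
      simp only [Set.mem_Ioi]; linarith [hw.2]
    have := phi_anti hγ0 hγ1 hmem1 hmem2 (by linarith [hw.1, hw.2])
    have e1 : ((k:ℝ) + 1) * π = k * π + π := by ring
    push_cast
    rw [e1]
    simp only at this
    calc (π - w + k * π) ^ (-γ) - (π - w + (k * π + π)) ^ (-γ)
        = (π - w + k * π) ^ (-γ) - ((π - w + k * π) + π) ^ (-γ) := by ring_nf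
      _ < (w + k * π) ^ (-γ) - ((w + k * π) + π) ^ (-γ) := this
      _ = (w + k * π) ^ (-γ) - (w + (k * π + π)) ^ (-γ) := by ring_nf
  have heq : (∫ v in (0:ℝ)..π,
      Real.cos v * ((v + k * π) ^ (-γ) - (v + (k + 1 : ℕ) * π) ^ (-γ)))
      = rieszA γ k - rieszA γ (k + 1) := by
    rw [rieszA_eq, rieszA_eq,
      ← intervalIntegral.integral_sub
        ((II_shift hγ1 ((k:ℝ)*π) 0 π).continuousOn_mul Real.continuous_cos.continuousOn)
        ((II_shift hγ1 (((k:ℕ)+1:ℕ)*π) 0 π).continuousOn_mul Real.continuous_cos.continuousOn)]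
    · apply intervalIntegral.integral_congr
      intro x _
      push_cast
      ring
  linarith [heq ▸ key]

lemma alt_decomp (n : ℕ) (b : ℕ → ℝ) :
    ∑ k ∈ Finset.range (n + 2), (-1:ℝ) ^ k * b k
      = b 0 - b 1 + ∑ k ∈ Finset.range n, (-1:ℝ) ^ k * b (k + 2) := by
  rw [Finset.sum_range_succ' (fun k => (-1:ℝ) ^ k * b k) (n + 1),
    Finset.sum_range_succ' (fun k => (-1:ℝ) ^ (k + 1) * b (k + 1)) n]
  have h : ∀ k, (-1:ℝ) ^ (k + 1 + 1) * b (k + 1 + 1) = (-1:ℝ) ^ k * b (k + 2) := by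
    intro k; rw [pow_succ, pow_succ]; ring
  rw [Finset.sum_congr rfl fun k _ => h k]
  simp only [pow_succ, pow_zero, one_mul]
  ring

lemma alt_bounds : ∀ (n : ℕ) (b : ℕ → ℝ), (∀ k, b (k + 1) ≤ b k) → (∀ k, 0 ≤ b k) →
    0 ≤ ∑ k ∈ Finset.range n, (-1:ℝ) ^ k * b k ∧
      ∑ k ∈ Finset.range n, (-1:ℝ) ^ k * b k ≤ b 0 := by
  intro n
  induction n using Nat.strong_induction_on with
  | _ n ih =>
    match n with
    | 0 => intro b _ hpos; simpa using hpos 0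
    | 1 => intro b _ hpos; simpa using hpos 0
    | (m + 2) =>
      intro b hmono hpos
      have IH := ih m (by omega) (fun k => b (k + 2)) (fun k => hmono (k + 2))
        (fun k => hpos (k + 2))
      rw [alt_decomp]
      constructor
      · linarith [hmono 0, IH.1]
      · linarith [hmono 1, IH.2]

lemma alt_lower (n : ℕ) (hn : 1 ≤ n) (b : ℕ → ℝ) (hmono : ∀ k, b (k + 1) ≤ b k)
    (hpos : ∀ k, 0 ≤ b k) :
    b 0 - b 1 ≤ ∑ k ∈ Finset.range n, (-1:ℝ) ^ k * b k := by
  match n with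
  | 1 => simpa using by linarith [hpos 1]
  | (m + 2) =>
    rw [alt_decomp]
    have := (alt_bounds m (fun k => b (k + 2)) (fun k => hmono (k + 2))
      (fun k => hpos (k + 2))).1
    linarith


lemma subst_lemma {γ : ℝ} (hγ0 : 0 < γ) (hγ1 : γ < 1) (n : ℕ) (hn : 1 ≤ n) :
    (∫ x in (0:ℝ)..π, Real.cos (n * x) * x ^ (-γ))
      = (n:ℝ) ^ (γ - 1) * ∫ u in (0:ℝ)..(n * π), Real.cos u * u ^ (-γ) := by
  have hπ := Real.pi_pos
  have hn0 : (0:ℝ) < n := by exact_mod_cast hn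
  calc (∫ x in (0:ℝ)..π, Real.cos (n * x) * x ^ (-γ))
      = ∫ x in (0:ℝ)..π, (fun u => Real.cos u * (u / n) ^ (-γ)) ((n:ℝ) * x) := by
        apply intervalIntegral.integral_congr
        intro x _
        simp only
        rw [mul_div_cancel_left₀ _ hn0.ne']
    _ = (n:ℝ)⁻¹ • ∫ u in ((n:ℝ) * 0)..((n:ℝ) * π), (fun u => Real.cos u * (u / n) ^ (-γ)) u :=
        intervalIntegral.integral_comp_mul_left (fun u => Real.cos u * (u / (n:ℝ)) ^ (-γ)) hn0.ne'
    _ = (n:ℝ)⁻¹ * ∫ u in (0:ℝ)..((n:ℝ) * π), (n:ℝ) ^ γ * (Real.cos u * u ^ (-γ)) := by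
        rw [mul_zero, smul_eq_mul]
        congr 1
        apply intervalIntegral.integral_congr
        intro u hu
        have hu0 : 0 ≤ u := by
          rw [Set.uIcc_of_le (by positivity)] at hu
          exact hu.1
        show Real.cos u * (u / n) ^ (-γ) = (n:ℝ) ^ γ * (Real.cos u * u ^ (-γ))
        rw [Real.div_rpow hu0 hn0.le, Real.rpow_neg hn0.le]
        have hne : ((n:ℝ) ^ γ) ≠ 0 := by positivity
        field_simp
    _ = (n:ℝ) ^ (γ - 1) * ∫ u in (0:ℝ)..(n * π), Real.cos u * u ^ (-γ) := by
        rw [intervalIntegral.integral_const_mul, ← mul_assoc]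
        congr 1
        rw [Real.rpow_sub hn0, Real.rpow_one]
        ring

lemma split_lemma {γ : ℝ} (hγ1 : γ < 1) (n : ℕ) :
    (∫ u in (0:ℝ)..(n * π), Real.cos u * u ^ (-γ))
      = ∑ k ∈ Finset.range n, (-1:ℝ) ^ k * rieszA γ k := by
  have hint : ∀ k : ℕ, IntervalIntegrable (fun u : ℝ => Real.cos u * u ^ (-γ)) volume
      ((k:ℝ) * π) (((k:ℕ) + 1 : ℕ) * π) := fun k =>
    (II_rpow hγ1 _ _).continuousOn_mul Real.continuous_cos.continuousOn
  have hsum := intervalIntegral.sum_integral_adjacent_intervals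
    (a := fun k : ℕ => (k:ℝ) * π) (f := fun u : ℝ => Real.cos u * u ^ (-γ))
    (μ := volume) (n := n) (fun k _ => hint k)
  simp only [Nat.cast_zero, zero_mul] at hsum
  rw [← hsum]
  apply Finset.sum_congr rfl
  intro k _
  have h := intervalIntegral.integral_comp_add_right (a := (0:ℝ)) (b := π)
    (fun u : ℝ => Real.cos u * u ^ (-γ)) ((k:ℝ) * π)
  rw [zero_add] at h
  have hb : π + (k:ℝ) * π = ((k:ℕ) + 1 : ℕ) * π := by push_cast; ring
  rw [hb] at h
  rw [← h, rieszA_eq, ← intervalIntegral.integral_const_mul]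
  apply intervalIntegral.integral_congr
  intro x _
  simp only
  have hc : Real.cos (x + (k:ℝ) * π) = (-1:ℝ) ^ k * Real.cos x := by
    have := Real.cos_add_int_mul_pi x (k : ℤ)
    push_cast at this
    exact_mod_cast this
  rw [hc]
  ring

/-- Riesz-kernel Fourier coefficients are commensurate with `n ^ (γ - 1)`. -/
theorem stmt_3 (γ : ℝ) (hγ0 : 0 < γ) (hγ1 : γ < 1)
    (q : ℕ → ℝ)
    (hq : ∀ n : ℕ, 1 ≤ n → q n = 2 * ∫ x in (0:ℝ)..π, Real.cos ((n : ℝ) * x) * x ^ (-γ)) :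
    ∃ c C : ℝ, 0 < c ∧ c ≤ C ∧
      ∀ n : ℕ, 1 ≤ n →
        c * (n : ℝ) ^ (γ - 1) ≤ q n ∧ q n ≤ C * (n : ℝ) ^ (γ - 1) ∧ 0 < q n := by
  refine ⟨2 * (rieszA γ 0 - rieszA γ 1), 2 * rieszA γ 0, ?_, ?_, ?_⟩
  · have := A_strict_anti hγ0 hγ1 0; linarith
  · have := A_pos hγ0 hγ1 1; linarith
  · intro n hn
    have hn0 : (0:ℝ) < n := by exact_mod_cast hn
    have hp : (0:ℝ) < (n:ℝ) ^ (γ - 1) := Real.rpow_pos_of_pos hn0 _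
    have hq' : q n = 2 * ((n:ℝ) ^ (γ - 1) * ∑ k ∈ Finset.range n, (-1:ℝ) ^ k * rieszA γ k) := by
      rw [hq n hn, subst_lemma hγ0 hγ1 n hn, split_lemma hγ1 n]
    have hmono : ∀ k, rieszA γ (k + 1) ≤ rieszA γ k := fun k => (A_strict_anti hγ0 hγ1 k).le
    have hposA : ∀ k, 0 ≤ rieszA γ k := fun k => (A_pos hγ0 hγ1 k).le
    have hub := (alt_bounds n (rieszA γ) hmono hposA).2
    have hlb := alt_lower n hn (rieszA γ) hmono hposA
    have hd := A_strict_anti hγ0 hγ1 0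
    have h1 := mul_le_mul_of_nonneg_left hlb hp.le
    have h2 := mul_le_mul_of_nonneg_left hub hp.le
    refine ⟨by rw [hq']; nlinarith, by rw [hq']; nlinarith, by rw [hq']; nlinarith⟩
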